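/- Pointwise assembly of lifting structures in a gluing category: let M : C₀ ⥤ C₁ be lex with universal maps π₀, π₁, and let τ be the induced universal Reedy fibration in Gl(M). For an object B ∈ Gl(M) and a map s : Y ⟶ E in the Reedy-fibrant slice over B, a choice of uniform left lifting structures of the 0-component s₀ against π₀ (over B₀) and of the 1-component s₁ against π₁ (over B₁) induces a uniform left lifting structure of s against τ (over B), compatible with reindexing along maps B' ⟶ B. (Lifts in Gl(M) are produced by first lifting the 0-component and then lifting the 1-component against the fibrant relative matching map.) -/

import Mathlib

set_option linter.unusedSectionVars false


open CategoryTheory CategoryTheory.Limits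

/-- A map is a `π`-fibration if it arises as a pullback of the universal map `π`. -/
def IsPiFib {C : Type*} [Category C] {Ut U : C} (π : Ut ⟶ U) {E B : C} (p : E ⟶ B) : Prop :=
  ∃ (c : B ⟶ U) (t : E ⟶ Ut), IsPullback t p π c

variable {C : Type*} [Category C] [HasPullbacks C]

/-- Reindexing of a map `s : Y ⟶ E` over `B` along `f : B' ⟶ B`. -/
noncomputable def reidx {Y E B B' : C} (yB : Y ⟶ B) (eB : E ⟶ B) (s : Y ⟶ E)
    (hs : s ≫ eB = yB) (f : B' ⟶ B) : pullback yB f ⟶ pullback eB f :=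
  pullback.map yB f eB f s (𝟙 B') (𝟙 B) (by simp [hs]) (by simp)

/-- The canonical comparison `(g ≫ f)^*Y ⟶ f^*Y` for `g : B'' ⟶ B'`, `f : B' ⟶ B`. -/
noncomputable def restr {Y B B' B'' : C} (yB : Y ⟶ B) (f : B' ⟶ B) (g : B'' ⟶ B') :
    pullback yB (g ≫ f) ⟶ pullback yB f :=
  pullback.map yB (g ≫ f) yB f (𝟙 Y) g (𝟙 B) (by simp) (by simp)

/-- A uniform left lifting structure of `s : Y ⟶ E` (over `B`) against the class `Fib`:
a reindexing-stable choice of diagonal fillers, making both triangles commute, for all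
lifting problems of pullbacks of `s` against maps in `Fib`. -/
structure UniformLifting (Fib : ∀ ⦃P Q : C⦄, (P ⟶ Q) → Prop)
    {Y E B : C} (yB : Y ⟶ B) (eB : E ⟶ B) (s : Y ⟶ E) (hs : s ≫ eB = yB) : Type _ where
  lift : ∀ {B' : C} (f : B' ⟶ B) {P Q : C} (w : P ⟶ Q), Fib w →
    ∀ (top : pullback yB f ⟶ P) (bot : pullback eB f ⟶ Q),
      reidx yB eB s hs f ≫ bot = top ≫ w → (pullback eB f ⟶ P)
  upper : ∀ {B' : C} (f : B' ⟶ B) {P Q : C} (w : P ⟶ Q) (hw : Fib w)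
    (top : pullback yB f ⟶ P) (bot : pullback eB f ⟶ Q)
    (h : reidx yB eB s hs f ≫ bot = top ≫ w),
    reidx yB eB s hs f ≫ lift f w hw top bot h = top
  lower : ∀ {B' : C} (f : B' ⟶ B) {P Q : C} (w : P ⟶ Q) (hw : Fib w)
    (top : pullback yB f ⟶ P) (bot : pullback eB f ⟶ Q)
    (h : reidx yB eB s hs f ≫ bot = top ≫ w),
    lift f w hw top bot h ≫ w = bot
  uniform : ∀ {B'' B' : C} (g : B'' ⟶ B') (f : B' ⟶ B) {P Q : C} (w : P ⟶ Q) (hw : Fib w)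
    (top : pullback yB f ⟶ P) (bot : pullback eB f ⟶ Q)
    (h : reidx yB eB s hs f ≫ bot = top ≫ w)
    (top' : pullback yB (g ≫ f) ⟶ P) (bot' : pullback eB (g ≫ f) ⟶ Q)
    (h' : reidx yB eB s hs (g ≫ f) ≫ bot' = top' ≫ w),
    top' = restr yB f g ≫ top → bot' = restr eB f g ≫ bot →
    lift (g ≫ f) w hw top' bot' h' = restr eB f g ≫ lift f w hw top bot h

section Glue

variable {C₀ C₁ : Type*} [Category C₀] [Category C₁]
  [HasFiniteLimits C₀] [HasFiniteLimits C₁]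

/-- A map in the gluing category `Gl(M) = C₁ ↓ M` is a Reedy fibration if its
`C₀`-component is a `π₀`-fibration and its relative matching map is a `π₁`-fibration. -/
def IsReedyFib (M : C₀ ⥤ C₁) {Ut₀ U₀ : C₀} (π₀ : Ut₀ ⟶ U₀) {Ut₁ U₁ : C₁} (π₁ : Ut₁ ⟶ U₁)
    {E B : Comma (𝟭 C₁) M} (f : E ⟶ B) : Prop :=
  IsPiFib π₀ f.right ∧
    IsPiFib π₁
      (pullback.lift f.left E.hom (by simpa using f.w) :
        E.left ⟶ pullback B.hom (M.map f.right))

section AuxConj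

variable {D : Type*} [Category D] [HasPullbacks D]

lemma reidx_fst {Y E B B' : D} (yB : Y ⟶ B) (eB : E ⟶ B) (s : Y ⟶ E)
    (hs : s ≫ eB = yB) (f : B' ⟶ B) :
    reidx yB eB s hs f ≫ pullback.fst eB f = pullback.fst yB f ≫ s := by
  simp [reidx, pullback.map]
  exact pullback.lift_fst _ _ _

lemma reidx_snd {Y E B B' : D} (yB : Y ⟶ B) (eB : E ⟶ B) (s : Y ⟶ E)
    (hs : s ≫ eB = yB) (f : B' ⟶ B) :
    reidx yB eB s hs f ≫ pullback.snd eB f = pullback.snd yB f := by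
  simp [reidx, pullback.map]
  exact pullback.lift_snd _ _ _

lemma restr_fst {Y B B' B'' : D} (yB : Y ⟶ B) (f : B' ⟶ B) (g : B'' ⟶ B') :
    restr yB f g ≫ pullback.fst yB f = pullback.fst yB (g ≫ f) := by
  simp [restr, pullback.map]
  exact pullback.lift_fst _ _ _

lemma restr_snd {Y B B' B'' : D} (yB : Y ⟶ B) (f : B' ⟶ B) (g : B'' ⟶ B') :
    restr yB f g ≫ pullback.snd yB f = pullback.snd yB (g ≫ f) ≫ g := by
  simp [restr, pullback.map]
  exact pullback.lift_snd _ _ _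

lemma conj_reidx {Y E B B' Py Pe : D} {yB : Y ⟶ B} {eB : E ⟶ B} {s : Y ⟶ E}
    (hs : s ≫ eB = yB) (f : B' ⟶ B)
    {ay : Py ⟶ Y} {by' : Py ⟶ B'} (hy : IsPullback ay by' yB f)
    {ae : Pe ⟶ E} {be : Pe ⟶ B'} (he : IsPullback ae be eB f)
    (r : Py ⟶ Pe) (h1 : r ≫ ae = ay ≫ s) (h2 : r ≫ be = by') :
    hy.isoPullback.hom ≫ reidx yB eB s hs f = r ≫ he.isoPullback.hom := by
  apply pullback.hom_ext
  · rw [Category.assoc, Category.assoc, reidx_fst, he.isoPullback_hom_fst, h1,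
      ← Category.assoc, hy.isoPullback_hom_fst]
  · rw [Category.assoc, Category.assoc, reidx_snd, he.isoPullback_hom_snd, h2,
      hy.isoPullback_hom_snd]

lemma conj_restr {Y B B' B'' Pf Pgf : D} {yB : Y ⟶ B} (f : B' ⟶ B) (g : B'' ⟶ B')
    {af : Pf ⟶ Y} {bf : Pf ⟶ B'} (hf : IsPullback af bf yB f)
    {agf : Pgf ⟶ Y} {bgf : Pgf ⟶ B''} (hgf : IsPullback agf bgf yB (g ≫ f))
    (r : Pgf ⟶ Pf) (h1 : r ≫ af = agf) (h2 : r ≫ bf = bgf ≫ g) :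
    hgf.isoPullback.hom ≫ restr yB f g = r ≫ hf.isoPullback.hom := by
  apply pullback.hom_ext
  · rw [Category.assoc, Category.assoc, restr_fst, hf.isoPullback_hom_fst, h1,
      hgf.isoPullback_hom_fst]
  · rw [Category.assoc, Category.assoc, restr_snd, hf.isoPullback_hom_snd, h2,
      ← Category.assoc, hgf.isoPullback_hom_snd]

end AuxConj

section AssemblyAux

variable (M : C₀ ⥤ C₁) [PreservesFiniteLimits M] [HasFiniteLimits (Comma (𝟭 C₁) M)]

/-- The second projection of the comma category preserves cospan-shaped limits. -/
noncomputable def sndPresCospan (F : WalkingCospan ⥤ Comma (𝟭 C₁) M) :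
    PreservesLimit F (Comma.snd (𝟭 C₁) M) :=
  preservesLimit_of_preserves_limit_cone
    (Comma.coneOfPreservesIsLimit F (limit.isLimit (F ⋙ Comma.fst (𝟭 C₁) M))
      (limit.isLimit (F ⋙ Comma.snd (𝟭 C₁) M)))
    ((limit.isLimit (F ⋙ Comma.snd (𝟭 C₁) M)).ofIsoLimit
      (Cones.ext (Iso.refl _) (fun j => by simp [Comma.coneOfPreserves])))

/-- The first projection of the comma category preserves cospan-shaped limits. -/
noncomputable def fstPresCospan (F : WalkingCospan ⥤ Comma (𝟭 C₁) M) :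
    PreservesLimit F (Comma.fst (𝟭 C₁) M) :=
  preservesLimit_of_preserves_limit_cone
    (Comma.coneOfPreservesIsLimit F (limit.isLimit (F ⋙ Comma.fst (𝟭 C₁) M))
      (limit.isLimit (F ⋙ Comma.snd (𝟭 C₁) M)))
    ((limit.isLimit (F ⋙ Comma.fst (𝟭 C₁) M)).ofIsoLimit
      (Cones.ext (Iso.refl _) (fun j => by simp [Comma.coneOfPreserves])))

lemma rightIsPullback {X Y Z : Comma (𝟭 C₁) M} (f : X ⟶ Z) (g : Y ⟶ Z) :
    IsPullback (pullback.fst f g).right (pullback.snd f g).right f.right g.right := by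
  haveI := sndPresCospan M (cospan f g)
  exact (Comma.snd (𝟭 C₁) M).map_isPullback (IsPullback.of_hasPullback f g)

lemma leftIsPullback {X Y Z : Comma (𝟭 C₁) M} (f : X ⟶ Z) (g : Y ⟶ Z) :
    IsPullback (pullback.fst f g).left (pullback.snd f g).left f.left g.left := by
  haveI := fstPresCospan M (cospan f g)
  exact (Comma.fst (𝟭 C₁) M).map_isPullback (IsPullback.of_hasPullback f g)

variable {Ut₀ U₀ : C₀} {π₀ : Ut₀ ⟶ U₀} {Ut₁ U₁ : C₁} {π₁ : Ut₁ ⟶ U₁}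
  {B Y E : Comma (𝟭 C₁) M} {yB : Y ⟶ B} {eB : E ⟶ B} {s : Y ⟶ E}

lemma hs_right (hs : s ≫ eB = yB) : s.right ≫ eB.right = yB.right := by
  rw [← Comma.comp_right, hs]

lemma hs_left (hs : s ≫ eB = yB) : s.left ≫ eB.left = yB.left := by
  rw [← Comma.comp_left, hs]

variable (hs : s ≫ eB = yB)

lemma key_reidx_right {B' : Comma (𝟭 C₁) M} (f : B' ⟶ B) :
    (rightIsPullback M yB f).isoPullback.hom ≫
        reidx yB.right eB.right s.right (hs_right M hs) f.right =
      (reidx yB eB s hs f).right ≫ (rightIsPullback M eB f).isoPullback.hom := by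
  apply conj_reidx
  · rw [← Comma.comp_right, reidx_fst, Comma.comp_right]
  · rw [← Comma.comp_right, reidx_snd]

lemma key_reidx_left {B' : Comma (𝟭 C₁) M} (f : B' ⟶ B) :
    (leftIsPullback M yB f).isoPullback.hom ≫
        reidx yB.left eB.left s.left (hs_left M hs) f.left =
      (reidx yB eB s hs f).left ≫ (leftIsPullback M eB f).isoPullback.hom := by
  apply conj_reidx
  · rw [← Comma.comp_left, reidx_fst, Comma.comp_left]
  · rw [← Comma.comp_left, reidx_snd]

lemma key_restr_right {Z : Comma (𝟭 C₁) M} (zB : Z ⟶ B)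
    {B' B'' : Comma (𝟭 C₁) M} (f : B' ⟶ B) (g : B'' ⟶ B') :
    (rightIsPullback M zB (g ≫ f)).isoPullback.hom ≫
        restr zB.right f.right g.right =
      (restr zB f g).right ≫ (rightIsPullback M zB f).isoPullback.hom := by
  apply conj_restr
  · rw [← Comma.comp_right, restr_fst]
  · rw [← Comma.comp_right, restr_snd, Comma.comp_right]

lemma key_restr_left {Z : Comma (𝟭 C₁) M} (zB : Z ⟶ B)
    {B' B'' : Comma (𝟭 C₁) M} (f : B' ⟶ B) (g : B'' ⟶ B') :
    (leftIsPullback M zB (g ≫ f)).isoPullback.hom ≫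
        restr zB.left f.left g.left =
      (restr zB f g).left ≫ (leftIsPullback M zB f).isoPullback.hom := by
  apply conj_restr
  · rw [← Comma.comp_left, restr_fst]
  · rw [← Comma.comp_left, restr_snd, Comma.comp_left]

variable (L₀ : UniformLifting (fun {_ _} w => IsPiFib π₀ w) yB.right eB.right s.right
    (hs_right M hs))
  (L₁ : UniformLifting (fun {_ _} w => IsPiFib π₁ w) yB.left eB.left s.left
    (hs_left M hs))

section Problem

variable {B' : Comma (𝟭 C₁) M} (f : B' ⟶ B) {P Q : Comma (𝟭 C₁) M} (w : P ⟶ Q)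
  (hw : IsReedyFib M π₀ π₁ w)
  (top : pullback yB f ⟶ P) (bot : pullback eB f ⟶ Q)
  (h : reidx yB eB s hs f ≫ bot = top ≫ w)

include h in
lemma glLift₀_cond :
    reidx yB.right eB.right s.right (hs_right M hs) f.right ≫
        ((rightIsPullback M eB f).isoPullback.inv ≫ bot.right) =
      ((rightIsPullback M yB f).isoPullback.inv ≫ top.right) ≫ w.right := by
  have key := key_reidx_right M hs f
  have key' : reidx yB.right eB.right s.right (hs_right M hs) f.right =
      (rightIsPullback M yB f).isoPullback.inv ≫ (reidx yB eB s hs f).right ≫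
        (rightIsPullback M eB f).isoPullback.hom := by
    rw [← key, Iso.inv_hom_id_assoc]
  rw [key']
  simp only [Category.assoc, Iso.hom_inv_id_assoc]
  rw [← Comma.comp_right, h, Comma.comp_right]

/-- The `C₀`-component of the assembled lift. -/
noncomputable def glLift₀ : (pullback eB f).right ⟶ P.right :=
  (rightIsPullback M eB f).isoPullback.hom ≫
    L₀.lift f.right w.right hw.1
      ((rightIsPullback M yB f).isoPullback.inv ≫ top.right)
      ((rightIsPullback M eB f).isoPullback.inv ≫ bot.right)
      (glLift₀_cond M hs f w top bot h)

lemma glLift₀_lower : glLift₀ M hs L₀ f w hw top bot h ≫ w.right = bot.right := by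
  unfold glLift₀
  rw [Category.assoc, L₀.lower, Iso.hom_inv_id_assoc]

lemma glLift₀_upper :
    (reidx yB eB s hs f).right ≫ glLift₀ M hs L₀ f w hw top bot h = top.right := by
  unfold glLift₀
  rw [← Category.assoc, ← key_reidx_right M hs f, Category.assoc, L₀.upper,
    Iso.hom_inv_id_assoc]

/-- The relative matching map of `w`. -/
noncomputable abbrev matchMap : P.left ⟶ pullback Q.hom (M.map w.right) :=
  pullback.lift w.left P.hom (by simpa using w.w)

/-- The bottom map of the left-component lifting problem. -/
noncomputable def glb₁ : (pullback eB f).left ⟶ pullback Q.hom (M.map w.right) :=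
  pullback.lift bot.left ((pullback eB f).hom ≫ M.map (glLift₀ M hs L₀ f w hw top bot h))
    (by
      rw [Category.assoc, ← M.map_comp, glLift₀_lower]
      simpa using bot.w)

lemma reidx_glb₁ :
    (reidx yB eB s hs f).left ≫ glb₁ M hs L₀ f w hw top bot h =
      top.left ≫ matchMap M w := by
  apply pullback.hom_ext
  · rw [Category.assoc, Category.assoc]
    unfold glb₁
    rw [pullback.lift_fst, pullback.lift_fst, ← Comma.comp_left, h, Comma.comp_left]
  · rw [Category.assoc, Category.assoc]
    unfold glb₁
    rw [pullback.lift_snd, pullback.lift_snd]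
    have hrw : (reidx yB eB s hs f).left ≫ (pullback eB f).hom =
        (pullback yB f).hom ≫ M.map (reidx yB eB s hs f).right := by
      simpa using (reidx yB eB s hs f).w
    rw [← Category.assoc, hrw, Category.assoc, ← M.map_comp, glLift₀_upper]
    simpa using top.w.symm

lemma glLift₁_cond :
    reidx yB.left eB.left s.left (hs_left M hs) f.left ≫
        ((leftIsPullback M eB f).isoPullback.inv ≫ glb₁ M hs L₀ f w hw top bot h) =
      ((leftIsPullback M yB f).isoPullback.inv ≫ top.left) ≫ matchMap M w := by
  have key := key_reidx_left M hs f
  have key' : reidx yB.left eB.left s.left (hs_left M hs) f.left =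
      (leftIsPullback M yB f).isoPullback.inv ≫ (reidx yB eB s hs f).left ≫
        (leftIsPullback M eB f).isoPullback.hom := by
    rw [← key, Iso.inv_hom_id_assoc]
  rw [key']
  simp only [Category.assoc, Iso.hom_inv_id_assoc]
  rw [reidx_glb₁]

/-- The `C₁`-component of the assembled lift. -/
noncomputable def glLift₁ : (pullback eB f).left ⟶ P.left :=
  (leftIsPullback M eB f).isoPullback.hom ≫
    L₁.lift f.left (matchMap M w) hw.2
      ((leftIsPullback M yB f).isoPullback.inv ≫ top.left)
      ((leftIsPullback M eB f).isoPullback.inv ≫ glb₁ M hs L₀ f w hw top bot h)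
      (glLift₁_cond M hs L₀ f w hw top bot h)

lemma glLift₁_matchMap :
    glLift₁ M hs L₀ L₁ f w hw top bot h ≫ matchMap M w =
      glb₁ M hs L₀ f w hw top bot h := by
  unfold glLift₁
  rw [Category.assoc, L₁.lower, Iso.hom_inv_id_assoc]

lemma glLift₁_upper :
    (reidx yB eB s hs f).left ≫ glLift₁ M hs L₀ L₁ f w hw top bot h = top.left := by
  unfold glLift₁
  rw [← Category.assoc, ← key_reidx_left M hs f, Category.assoc, L₁.upper,
    Iso.hom_inv_id_assoc]

/-- The assembled lift in the comma category. -/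
noncomputable def glLift : pullback eB f ⟶ P where
  left := glLift₁ M hs L₀ L₁ f w hw top bot h
  right := glLift₀ M hs L₀ f w hw top bot h
  w := by
    have h1 : glLift₁ M hs L₀ L₁ f w hw top bot h ≫ P.hom =
        glb₁ M hs L₀ f w hw top bot h ≫ pullback.snd Q.hom (M.map w.right) := by
      rw [← glLift₁_matchMap M hs L₀ L₁ f w hw top bot h, Category.assoc,
        pullback.lift_snd]
    simp only [Functor.id_map]
    rw [h1]
    unfold glb₁
    rw [pullback.lift_snd]

lemma glLift_upper :
    reidx yB eB s hs f ≫ glLift M hs L₀ L₁ f w hw top bot h = top := by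
  apply CommaMorphism.ext
  · exact glLift₁_upper M hs L₀ L₁ f w hw top bot h
  · exact glLift₀_upper M hs L₀ f w hw top bot h

lemma glLift_lower : glLift M hs L₀ L₁ f w hw top bot h ≫ w = bot := by
  apply CommaMorphism.ext
  · show glLift₁ M hs L₀ L₁ f w hw top bot h ≫ w.left = bot.left
    have hw1 : w.left = matchMap M w ≫ pullback.fst Q.hom (M.map w.right) := by
      rw [pullback.lift_fst]
    rw [hw1, ← Category.assoc, glLift₁_matchMap]
    unfold glb₁
    rw [pullback.lift_fst]
  · exact glLift₀_lower M hs L₀ f w hw top bot h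

end Problem

section Uniformity

variable {B'' B' : Comma (𝟭 C₁) M} (g : B'' ⟶ B') (f : B' ⟶ B)
  {P Q : Comma (𝟭 C₁) M} (w : P ⟶ Q) (hw : IsReedyFib M π₀ π₁ w)
  (top : pullback yB f ⟶ P) (bot : pullback eB f ⟶ Q)
  (h : reidx yB eB s hs f ≫ bot = top ≫ w)
  (top' : pullback yB (g ≫ f) ⟶ P) (bot' : pullback eB (g ≫ f) ⟶ Q)
  (h' : reidx yB eB s hs (g ≫ f) ≫ bot' = top' ≫ w)
  (htop : top' = restr yB f g ≫ top) (hbot : bot' = restr eB f g ≫ bot)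

include htop hbot in
lemma glLift₀_uniform :
    glLift₀ M hs L₀ (g ≫ f) w hw top' bot' h' =
      (restr eB f g).right ≫ glLift₀ M hs L₀ f w hw top bot h := by
  have kY : restr yB.right f.right g.right ≫ (rightIsPullback M yB f).isoPullback.inv =
      (rightIsPullback M yB (g ≫ f)).isoPullback.inv ≫ (restr yB f g).right := by
    rw [Iso.comp_inv_eq, Category.assoc, ← key_restr_right M yB f g,
      Iso.inv_hom_id_assoc]
  have kE : restr eB.right f.right g.right ≫ (rightIsPullback M eB f).isoPullback.inv =
      (rightIsPullback M eB (g ≫ f)).isoPullback.inv ≫ (restr eB f g).right := by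
    rw [Iso.comp_inv_eq, Category.assoc, ← key_restr_right M eB f g,
      Iso.inv_hom_id_assoc]
  have u := L₀.uniform g.right f.right w.right hw.1
    ((rightIsPullback M yB f).isoPullback.inv ≫ top.right)
    ((rightIsPullback M eB f).isoPullback.inv ≫ bot.right)
    (glLift₀_cond M hs f w top bot h)
    ((rightIsPullback M yB (g ≫ f)).isoPullback.inv ≫ top'.right)
    ((rightIsPullback M eB (g ≫ f)).isoPullback.inv ≫ bot'.right)
    (glLift₀_cond M hs (g ≫ f) w top' bot' h')
    (by rw [htop, ← Category.assoc, kY, Category.assoc]; all_goals rfl)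
    (by rw [hbot, ← Category.assoc, kE, Category.assoc]; all_goals rfl)
  have e1 : glLift₀ M hs L₀ (g ≫ f) w hw top' bot' h' =
      (rightIsPullback M eB (g ≫ f)).isoPullback.hom ≫
        L₀.lift (g.right ≫ f.right) w.right hw.1
          ((rightIsPullback M yB (g ≫ f)).isoPullback.inv ≫ top'.right)
          ((rightIsPullback M eB (g ≫ f)).isoPullback.inv ≫ bot'.right)
          (glLift₀_cond M hs (g ≫ f) w top' bot' h') := rfl
  rw [e1, u, ← Category.assoc, key_restr_right M eB f g, Category.assoc]
  rfl

include htop hbot in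
lemma glb₁_uniform :
    glb₁ M hs L₀ (g ≫ f) w hw top' bot' h' =
      (restr eB f g).left ≫ glb₁ M hs L₀ f w hw top bot h := by
  apply pullback.hom_ext
  · unfold glb₁
    rw [pullback.lift_fst, Category.assoc, pullback.lift_fst, hbot, Comma.comp_left]
  · unfold glb₁
    rw [pullback.lift_snd, Category.assoc, pullback.lift_snd]
    have hrw : (restr eB f g).left ≫ (pullback eB f).hom =
        (pullback eB (g ≫ f)).hom ≫ M.map (restr eB f g).right := by
      simpa using (restr eB f g).w
    rw [← Category.assoc, hrw, Category.assoc, ← M.map_comp,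
      ← glLift₀_uniform M hs L₀ g f w hw top bot h top' bot' h' htop hbot]

include htop hbot in
lemma glLift₁_uniform :
    glLift₁ M hs L₀ L₁ (g ≫ f) w hw top' bot' h' =
      (restr eB f g).left ≫ glLift₁ M hs L₀ L₁ f w hw top bot h := by
  have kY : restr yB.left f.left g.left ≫ (leftIsPullback M yB f).isoPullback.inv =
      (leftIsPullback M yB (g ≫ f)).isoPullback.inv ≫ (restr yB f g).left := by
    rw [Iso.comp_inv_eq, Category.assoc, ← key_restr_left M yB f g,
      Iso.inv_hom_id_assoc]
  have kE : restr eB.left f.left g.left ≫ (leftIsPullback M eB f).isoPullback.inv =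
      (leftIsPullback M eB (g ≫ f)).isoPullback.inv ≫ (restr eB f g).left := by
    rw [Iso.comp_inv_eq, Category.assoc, ← key_restr_left M eB f g,
      Iso.inv_hom_id_assoc]
  have u := L₁.uniform g.left f.left (matchMap M w) hw.2
    ((leftIsPullback M yB f).isoPullback.inv ≫ top.left)
    ((leftIsPullback M eB f).isoPullback.inv ≫ glb₁ M hs L₀ f w hw top bot h)
    (glLift₁_cond M hs L₀ f w hw top bot h)
    ((leftIsPullback M yB (g ≫ f)).isoPullback.inv ≫ top'.left)
    ((leftIsPullback M eB (g ≫ f)).isoPullback.inv ≫ glb₁ M hs L₀ (g ≫ f) w hw top' bot' h')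
    (glLift₁_cond M hs L₀ (g ≫ f) w hw top' bot' h')
    (by rw [htop, ← Category.assoc, kY, Category.assoc]; all_goals rfl)
    (by rw [glb₁_uniform M hs L₀ g f w hw top bot h top' bot' h' htop hbot,
          ← Category.assoc, ← Category.assoc, kE]; all_goals rfl)
  have e1 : glLift₁ M hs L₀ L₁ (g ≫ f) w hw top' bot' h' =
      (leftIsPullback M eB (g ≫ f)).isoPullback.hom ≫
        L₁.lift (g.left ≫ f.left) (matchMap M w) hw.2
          ((leftIsPullback M yB (g ≫ f)).isoPullback.inv ≫ top'.left)
          ((leftIsPullback M eB (g ≫ f)).isoPullback.inv ≫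
            glb₁ M hs L₀ (g ≫ f) w hw top' bot' h')
          (glLift₁_cond M hs L₀ (g ≫ f) w hw top' bot' h') := rfl
  rw [e1, u, ← Category.assoc, key_restr_left M eB f g, Category.assoc]
  rfl

include htop hbot in
lemma glLift_uniform :
    glLift M hs L₀ L₁ (g ≫ f) w hw top' bot' h' =
      restr eB f g ≫ glLift M hs L₀ L₁ f w hw top bot h := by
  apply CommaMorphism.ext
  · exact glLift₁_uniform M hs L₀ L₁ g f w hw top bot h top' bot' h' htop hbot
  · exact glLift₀_uniform M hs L₀ g f w hw top bot h top' bot' h' htop hbot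

end Uniformity

end AssemblyAux

/-- pointwise assembly of lifting structures in a gluing category: for a
map `s : Y ⟶ E` in the Reedy-fibrant slice over `B ∈ Gl(M)`, uniform left lifting
structures of the `C₀`-component `s₀` against `π₀` over `B₀` and of the `C₁`-component
`s₁` against `π₁` over `B₁` induce a uniform left lifting structure of `s` against the
Reedy fibrations (the `τ`-fibrations) over `B`, compatibly with reindexing. -/
theorem glue_lifting_assembly (M : C₀ ⥤ C₁) [PreservesFiniteLimits M]
    [HasFiniteLimits (Comma (𝟭 C₁) M)]
    {Ut₀ U₀ : C₀} (π₀ : Ut₀ ⟶ U₀) {Ut₁ U₁ : C₁} (π₁ : Ut₁ ⟶ U₁)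
    {B Y E : Comma (𝟭 C₁) M} (yB : Y ⟶ B) (eB : E ⟶ B)
    (hyB : IsReedyFib M π₀ π₁ yB) (heB : IsReedyFib M π₀ π₁ eB)
    (s : Y ⟶ E) (hs : s ≫ eB = yB)
    (L₀ : UniformLifting (fun {_ _} w => IsPiFib π₀ w) yB.right eB.right s.right
      (by rw [← Comma.comp_right, hs]))
    (L₁ : UniformLifting (fun {_ _} w => IsPiFib π₁ w) yB.left eB.left s.left
      (by rw [← Comma.comp_left, hs])) :
    Nonempty (UniformLifting (fun {_ _} w => IsReedyFib M π₀ π₁ w) yB eB s hs) := by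
  exact ⟨{
    lift := fun {B'} f {P Q} w hw top bot h => glLift M hs L₀ L₁ f w hw top bot h
    upper := fun {B'} f {P Q} w hw top bot h => glLift_upper M hs L₀ L₁ f w hw top bot h
    lower := fun {B'} f {P Q} w hw top bot h => glLift_lower M hs L₀ L₁ f w hw top bot h
    uniform := fun {B'' B'} g f {P Q} w hw top bot h top' bot' h' htop hbot =>
      glLift_uniform M hs L₀ L₁ g f w hw top bot h top' bot' h' htop hbot }⟩

end Glue
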